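/- For every integer ℓ ≥ 1, let k = ⌈ℓ · log₂(3/2)⌉ and let c_ℓ denote the number of proper 3-colorings of the graph T(u,v,k,ℓ). Then c_ℓ ≤ 2^(6 · 3^ℓ). -/

import Mathlib

/-- The base relation for the graph `P(u,v,b)`: vertices are `Sum.inl 0 = u`,
`Sum.inl 1 = v`, and `Sum.inr i = v_{i+1}` (0-indexed path vertices).
Edges: consecutive path vertices, `u` to odd-numbered path vertices `v₁, v₃, …`
(even 0-based index), and `v` to even-numbered ones `v₂, v₄, …`. -/
def PAdj (b : ℕ) : (Fin 2 ⊕ Fin b) → (Fin 2 ⊕ Fin b) → Prop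
  | Sum.inr i, Sum.inr j => (j : ℕ) = (i : ℕ) + 1
  | Sum.inl x, Sum.inr i => (x : ℕ) = (i : ℕ) % 2
  | _, _ => False

/-- The graph `P(u,v,b)`. -/
def Pgraph (b : ℕ) : SimpleGraph (Fin 2 ⊕ Fin b) := SimpleGraph.fromRel (PAdj b)

/-- The set of proper 3-colorings of a graph `G`. -/
def properColorings {V : Type*} (G : SimpleGraph V) : Set (V → Fin 3) :=
  {ψ | ∀ a b, G.Adj a b → ψ a ≠ ψ b}

/-- The type of "inner" vertices of `T(u,v,k,ℓ)` (all vertices except the two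
special vertices `u, v`). At level `0` these are the `2^k` path vertices of
`P(u,v,2^k)`; at level `ℓ+1` they are the five path vertices `v₁,…,v₅` of the
base copy of `P(u,v,5)` together with the inner vertices of the three glued
copies of `T(·,·,k,ℓ)`. -/
def TInner (k : ℕ) : ℕ → Type
  | 0 => Fin (2 ^ k)
  | ℓ + 1 => Fin 5 ⊕ (Fin 3 × TInner k ℓ)

/-- The vertex type of `T(u,v,k,ℓ)`: the special vertices `u = Sum.inl 0`,
`v = Sum.inl 1` together with the inner vertices. -/
abbrev TVert (k ℓ : ℕ) : Type := Fin 2 ⊕ TInner k ℓ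

/-- The pair of path vertices of `P(u,v,5)` onto which the `c`-th copy of
`T(·,·,k,ℓ-1)` is glued: `(v₁,v₃)` for `c = 0`, `(v₂,v₄)` for `c = 1`,
`(v₃,v₅)` for `c = 2` (0-indexed). -/
def gluePair (c : Fin 3) : Fin 5 × Fin 5 :=
  (⟨c.val, by omega⟩, ⟨c.val + 2, by have := c.isLt; omega⟩)

/-- The embedding of the `c`-th copy of `T(·,·,k,ℓ)` into `T(u,v,k,ℓ+1)`:
its special vertices are identified with the glue pair, and its inner vertices
are tagged with `c`. -/
def embedT (k ℓ : ℕ) (c : Fin 3) : TVert k ℓ → TVert k (ℓ + 1)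
  | Sum.inl x => if x = 0 then Sum.inr (Sum.inl (gluePair c).1)
                 else Sum.inr (Sum.inl (gluePair c).2)
  | Sum.inr w => Sum.inr (Sum.inr (c, w))

/-- The embedding of the base copy of `P(u,v,5)` into `T(u,v,k,ℓ+1)`. -/
def embedP (k ℓ : ℕ) : (Fin 2 ⊕ Fin 5) → TVert k (ℓ + 1)
  | Sum.inl x => Sum.inl x
  | Sum.inr y => Sum.inr (Sum.inl y)

/-- The graph `T(u,v,k,ℓ)`, defined recursively: `T(u,v,k,0) = P(u,v,2^k)`, and
`T(u,v,k,ℓ+1)` is obtained from `P(u,v,5)` by gluing three copies of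
`T(·,·,k,ℓ)` onto the pairs `(v₁,v₃)`, `(v₂,v₄)`, `(v₃,v₅)`. -/
def TGraph (k : ℕ) : (ℓ : ℕ) → SimpleGraph (TVert k ℓ)
  | 0 => Pgraph (2 ^ k)
  | ℓ + 1 => SimpleGraph.fromRel (fun a b =>
      (∃ x y, (Pgraph 5).Adj x y ∧ a = embedP k ℓ x ∧ b = embedP k ℓ y) ∨
      (∃ c x y, (TGraph k ℓ).Adj x y ∧ a = embedT k ℓ c x ∧ b = embedT k ℓ c y))

instance TInner.fintype (k : ℕ) : ∀ j, Fintype (TInner k j)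
  | 0 => inferInstanceAs (Fintype (Fin (2 ^ k)))
  | j + 1 => letI := TInner.fintype k j
      inferInstanceAs (Fintype (Fin 5 ⊕ (Fin 3 × TInner k j)))
instance (b : ℕ) : DecidableRel (PAdj b) := fun x y =>
  match x, y with
  | Sum.inr i, Sum.inr j => inferInstanceAs (Decidable ((j:ℕ) = (i:ℕ) + 1))
  | Sum.inl x, Sum.inr i => inferInstanceAs (Decidable ((x:ℕ) = (i:ℕ) % 2))
  | Sum.inl _, Sum.inl _ => inferInstanceAs (Decidable False)
  | Sum.inr _, Sum.inl _ => inferInstanceAs (Decidable False)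
instance (b : ℕ) : DecidableRel (Pgraph b).Adj := fun x y =>
  inferInstanceAs (Decidable (x ≠ y ∧ (PAdj b x y ∨ PAdj b y x)))
/-- colorings with boundary values -/
def bset {I : Type} (G : SimpleGraph (Fin 2 ⊕ I)) (a b : Fin 3) : Type :=
  {ψ : (Fin 2 ⊕ I) → Fin 3 // ψ ∈ properColorings G ∧ ψ (Sum.inl 0) = a ∧ ψ (Sum.inl 1) = b}
instance {I : Type} [Finite I] (G : SimpleGraph (Fin 2 ⊕ I)) (a b : Fin 3) :
    Finite (bset G a b) := by unfold bset; infer_instance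
lemma comp_proper {V : Type*} {G : SimpleGraph V} {ψ : V → Fin 3} (σ : Equiv.Perm (Fin 3))
    (h : ψ ∈ properColorings G) : (σ ∘ ψ) ∈ properColorings G :=
  fun a b hab e => h a b hab (σ.injective e)
lemma card_bset_perm {I : Type} (G : SimpleGraph (Fin 2 ⊕ I)) (σ : Equiv.Perm (Fin 3))
    (a b : Fin 3) : Nat.card (bset G (σ a) (σ b)) = Nat.card (bset G a b) := by
  refine Nat.card_congr (Equiv.symm ⟨fun ψ => ⟨σ ∘ ψ.1, comp_proper σ ψ.2.1, ?_, ?_⟩,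
    fun ψ => ⟨σ.symm ∘ ψ.1, comp_proper σ.symm ψ.2.1, ?_, ?_⟩, fun ψ => ?_, fun ψ => ?_⟩)
  · simp [ψ.2.2.1]
  · simp [ψ.2.2.2]
  · simp [ψ.2.2.1]
  · simp [ψ.2.2.2]
  · exact Subtype.ext (by ext v; simp)
  · exact Subtype.ext (by ext v; simp)
lemma exists_perm01 : ∀ a b : Fin 3, a ≠ b → ∃ σ : Equiv.Perm (Fin 3), σ 0 = a ∧ σ 1 = b := by
  decide
lemma card_bset_diag {I : Type} (G : SimpleGraph (Fin 2 ⊕ I)) (a : Fin 3) :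
    Nat.card (bset G a a) = Nat.card (bset G 0 0) := by
  have := card_bset_perm G (Equiv.swap 0 a) 0 0
  simpa using this
lemma card_bset_offdiag {I : Type} (G : SimpleGraph (Fin 2 ⊕ I)) {a b : Fin 3} (h : a ≠ b) :
    Nat.card (bset G a b) = Nat.card (bset G 0 1) := by
  obtain ⟨σ, h0, h1⟩ := exists_perm01 a b h
  have := card_bset_perm G σ 0 1
  rw [h0, h1] at this
  exact this
lemma adj_special {b : ℕ} (x : Fin 2) (i : Fin b) (h : (x:ℕ) = (i:ℕ) % 2) :
    (Pgraph b).Adj (Sum.inl x) (Sum.inr i) := by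
  rw [Pgraph, SimpleGraph.fromRel_adj]
  exact ⟨by simp, Or.inl h⟩
lemma adj_path {b : ℕ} (i j : Fin b) (h : (j:ℕ) = (i:ℕ) + 1) :
    (Pgraph b).Adj (Sum.inr i) (Sum.inr j) := by
  rw [Pgraph, SimpleGraph.fromRel_adj]
  refine ⟨by simp; omega, Or.inl h⟩
/-- the special vertex adjacent to path vertex i -/
lemma proper_ne_special {b : ℕ} {ψ : (Fin 2 ⊕ Fin b) → Fin 3}
    (h : ψ ∈ properColorings (Pgraph b)) (i : Fin b) :
    ψ (Sum.inl ⟨(i:ℕ) % 2, Nat.mod_lt _ (by norm_num)⟩) ≠ ψ (Sum.inr i) :=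
  h _ _ (adj_special _ i rfl)
lemma fin2_cases (x : Fin 2) : x = 0 ∨ x = 1 := by omega
lemma fin3_unique : ∀ p x y : Fin 3, p ≠ 0 → x ≠ p → x ≠ 0 → y ≠ p → y ≠ 0 → x = y := by decide
lemma card_ne_fin3 : ∀ c : Fin 3, Nat.card {x : Fin 3 // x ≠ c} = 2 := by
  intro c
  rw [Nat.card_eq_fintype_card]
  revert c; decide
/-- B2 : boundary (0,1) count for Pgraph b -/
lemma card_bset_P01 (b : ℕ) : Nat.card (bset (Pgraph b) 0 1) ≤ 2 ^ b := by
  classical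
  have key : ∀ ψ : bset (Pgraph b) 0 1, ∀ i : Fin b,
      ψ.1 (Sum.inr i) ≠ (if (i:ℕ) % 2 = 0 then (0 : Fin 3) else 1) := by
    rintro ⟨ψ, hp, h0, h1⟩ i
    have := proper_ne_special hp i
    rcases Nat.even_or_odd (i:ℕ) with he | ho
    · have e0 : (⟨(i:ℕ) % 2, Nat.mod_lt _ (by norm_num)⟩ : Fin 2) = 0 := by
        have := Nat.even_iff.mp he; exact Fin.ext (by simpa)
      rw [e0, h0] at this
      simp only [Nat.even_iff.mp he, if_pos]
      exact fun e => this e.symm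
    · have e1 : (⟨(i:ℕ) % 2, Nat.mod_lt _ (by norm_num)⟩ : Fin 2) = 1 := by
        have := Nat.odd_iff.mp ho; exact Fin.ext (by simpa)
      rw [e1, h1] at this
      simp only [Nat.odd_iff.mp ho, if_neg (by omega : ¬(1 = 0))]
      exact fun e => this e.symm
  let F : bset (Pgraph b) 0 1 →
      (∀ i : Fin b, {x : Fin 3 // x ≠ (if (i:ℕ) % 2 = 0 then (0 : Fin 3) else 1)}) :=
    fun ψ i => ⟨ψ.1 (Sum.inr i), key ψ i⟩
  have hinj : Function.Injective F := by
    intro ψ ψ' h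
    apply Subtype.ext; funext v
    rcases v with x | i
    · rcases fin2_cases x with rfl | rfl
      · rw [ψ.2.2.1, ψ'.2.2.1]
      · rw [ψ.2.2.2, ψ'.2.2.2]
    · exact congrArg Subtype.val (congrFun h i)
  calc Nat.card (bset (Pgraph b) 0 1) ≤ Nat.card (∀ i : Fin b, {x : Fin 3 // x ≠ _}) :=
        Nat.card_le_card_of_injective F hinj
    _ = ∏ _i : Fin b, 2 := by rw [Nat.card_pi]; exact Finset.prod_congr rfl fun i _ => card_ne_fin3 _
    _ = 2 ^ b := by simp
/-- all path vertices avoid 0 when boundary is (0,0) -/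
lemma bset00_ne_zero {b : ℕ} (ψ : bset (Pgraph b) 0 0) (i : Fin b) : ψ.1 (Sum.inr i) ≠ 0 := by
  obtain ⟨ψ, hp, h0, h1⟩ := ψ
  have := proper_ne_special hp i
  rcases fin2_cases ⟨(i:ℕ) % 2, Nat.mod_lt _ (by norm_num)⟩ with e | e <;> rw [e] at this
  · rw [h0] at this; exact fun e2 => this e2.symm
  · rw [h1] at this; exact fun e2 => this e2.symm
/-- B1 : boundary (0,0) count for Pgraph b, b ≥ 1 -/
lemma card_bset_P00 (b : ℕ) (hb : 0 < b) : Nat.card (bset (Pgraph b) 0 0) ≤ 2 := by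
  classical
  let F : bset (Pgraph b) 0 0 → {x : Fin 3 // x ≠ 0} :=
    fun ψ => ⟨ψ.1 (Sum.inr ⟨0, hb⟩), bset00_ne_zero ψ _⟩
  have key : ∀ ψ ψ' : bset (Pgraph b) 0 0,
      ψ.1 (Sum.inr ⟨0, hb⟩) = ψ'.1 (Sum.inr ⟨0, hb⟩) →
      ∀ i : ℕ, ∀ h : i < b, ψ.1 (Sum.inr ⟨i, h⟩) = ψ'.1 (Sum.inr ⟨i, h⟩) := by
    intro ψ ψ' h0 i
    induction i with
    | zero => intro h; exact h0
    | succ i ih =>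
      intro h
      have hi : i < b := by omega
      have hadj : (Pgraph b).Adj (Sum.inr ⟨i, hi⟩) (Sum.inr ⟨i+1, h⟩) := adj_path _ _ rfl
      exact fin3_unique (ψ.1 (Sum.inr ⟨i, hi⟩)) _ _
        (bset00_ne_zero ψ _)
        (fun e => (ψ.2.1 _ _ hadj) e.symm)
        (bset00_ne_zero ψ _)
        (fun e => (ψ'.2.1 _ _ hadj) (e.trans (ih hi)).symm)
        (bset00_ne_zero ψ' _)
  have hinj : Function.Injective F := by
    intro ψ ψ' h
    apply Subtype.ext; funext v
    rcases v with x | i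
    · rcases fin2_cases x with rfl | rfl
      · rw [ψ.2.2.1, ψ'.2.2.1]
      · rw [ψ.2.2.2, ψ'.2.2.2]
    · obtain ⟨i, hi⟩ := i
      exact key ψ ψ' (congrArg Subtype.val h) i hi
  calc Nat.card (bset (Pgraph b) 0 0) ≤ Nat.card {x : Fin 3 // x ≠ 0} :=
        Nat.card_le_card_of_injective F hinj
    _ = 2 := card_ne_fin3 0
lemma fin3_pair_exists : ∀ p q v0 v1 v2 v3 v4 : Fin 3, p ≠ v0 → p ≠ v2 → p ≠ v4 →
    q ≠ v1 → q ≠ v3 → v0 ≠ v1 → v1 ≠ v2 → v2 ≠ v3 → v3 ≠ v4 →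
    (v0 = v2 ∨ v1 = v3 ∨ v2 = v4) := by decide
lemma fin3_pair_all : ∀ a v0 v1 v2 v3 v4 : Fin 3, a ≠ v0 → a ≠ v2 → a ≠ v4 →
    a ≠ v1 → a ≠ v3 → v0 ≠ v1 → v1 ≠ v2 → v2 ≠ v3 → v3 ≠ v4 →
    (v0 = v2 ∧ v1 = v3 ∧ v2 = v4) := by decide
section P5facts
variable {φ : (Fin 2 ⊕ Fin 5) → Fin 3} (h : φ ∈ properColorings (Pgraph 5))
include h in
lemma P5_nine : φ (Sum.inl 0) ≠ φ (Sum.inr 0) ∧ φ (Sum.inl 0) ≠ φ (Sum.inr 2) ∧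
    φ (Sum.inl 0) ≠ φ (Sum.inr 4) ∧ φ (Sum.inl 1) ≠ φ (Sum.inr 1) ∧
    φ (Sum.inl 1) ≠ φ (Sum.inr 3) ∧ φ (Sum.inr 0) ≠ φ (Sum.inr 1) ∧
    φ (Sum.inr 1) ≠ φ (Sum.inr 2) ∧ φ (Sum.inr 2) ≠ φ (Sum.inr 3) ∧
    φ (Sum.inr 3) ≠ φ (Sum.inr 4) :=
  ⟨h _ _ (by decide), h _ _ (by decide), h _ _ (by decide), h _ _ (by decide),
   h _ _ (by decide), h _ _ (by decide), h _ _ (by decide), h _ _ (by decide),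
   h _ _ (by decide)⟩
include h in
lemma P5_exists_pair : ∃ c : Fin 3,
    φ (Sum.inr (gluePair c).1) = φ (Sum.inr (gluePair c).2) := by
  obtain ⟨h1, h2, h3, h4, h5, h6, h7, h8, h9⟩ := P5_nine h
  rcases fin3_pair_exists _ _ _ _ _ _ _ h1 h2 h3 h4 h5 h6 h7 h8 h9 with e | e | e
  · exact ⟨0, e⟩
  · exact ⟨1, e⟩
  · exact ⟨2, e⟩
include h in
lemma P5_all_pairs (heq : φ (Sum.inl 0) = φ (Sum.inl 1)) (c : Fin 3) :
    φ (Sum.inr (gluePair c).1) = φ (Sum.inr (gluePair c).2) := by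
  obtain ⟨h1, h2, h3, h4, h5, h6, h7, h8, h9⟩ := P5_nine h
  rw [heq] at h1 h2 h3
  obtain ⟨e1, e2, e3⟩ := fin3_pair_all _ _ _ _ _ _ h1 h2 h3 h4 h5 h6 h7 h8 h9
  fin_cases c
  · exact e1
  · exact e2
  · exact e3
end P5facts
lemma embedT_apply_inl0 (k j : ℕ) (c : Fin 3) :
    embedT k j c (Sum.inl 0) = Sum.inr (Sum.inl (gluePair c).1) := rfl
lemma embedT_apply_inl1 (k j : ℕ) (c : Fin 3) :
    embedT k j c (Sum.inl 1) = Sum.inr (Sum.inl (gluePair c).2) := rfl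
lemma embedP_inj (k j : ℕ) : Function.Injective (embedP k j) := by
  intro x y h
  rcases x with x | x <;> rcases y with y | y
  · injection h with h; rw [h]
  · simp [embedP] at h
  · simp [embedP] at h
  · injection h with h; injection h with h; rw [h]
lemma embedT_inj (k j : ℕ) (c : Fin 3) : Function.Injective (embedT k j c) := by
  have hne : (gluePair c).1 ≠ (gluePair c).2 := by
    simp only [gluePair, ne_eq, Fin.mk.injEq]; omega
  intro x y h
  rcases x with x | w
  · rcases y with y | w'
    · rcases fin2_cases x with rfl | rfl <;> rcases fin2_cases y with rfl | rfl
      · rfl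
      · rw [embedT_apply_inl0, embedT_apply_inl1] at h
        injection h with h; injection h with h; exact absurd h hne
      · rw [embedT_apply_inl0, embedT_apply_inl1] at h
        injection h with h; injection h with h; exact absurd h.symm hne
      · rfl
    · rcases fin2_cases x with rfl | rfl
      · rw [embedT_apply_inl0] at h
        injection h with h; exact absurd h Sum.inl_ne_inr
      · rw [embedT_apply_inl1] at h
        injection h with h; exact absurd h Sum.inl_ne_inr
  · rcases y with y | w'
    · rcases fin2_cases y with rfl | rfl
      · rw [embedT_apply_inl0] at h
        injection h with h; exact absurd h Sum.inr_ne_inl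
      · rw [embedT_apply_inl1] at h
        injection h with h; exact absurd h Sum.inr_ne_inl
    · injection h with h; injection h with h
      injection h with h1 h2; rw [h2]
lemma TGraph_succ_adj (k j : ℕ) (a b : TVert k (j + 1)) :
    (TGraph k (j + 1)).Adj a b ↔ a ≠ b ∧
      (((∃ x y, (Pgraph 5).Adj x y ∧ a = embedP k j x ∧ b = embedP k j y) ∨
        (∃ c x y, (TGraph k j).Adj x y ∧ a = embedT k j c x ∧ b = embedT k j c y)) ∨
       ((∃ x y, (Pgraph 5).Adj x y ∧ b = embedP k j x ∧ a = embedP k j y) ∨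
        (∃ c x y, (TGraph k j).Adj x y ∧ b = embedT k j c x ∧ a = embedT k j c y))) := by
  show (SimpleGraph.fromRel _).Adj a b ↔ _
  rw [SimpleGraph.fromRel_adj]
lemma proper_succ_iff (k j : ℕ) (ψ : TVert k (j + 1) → Fin 3) :
    ψ ∈ properColorings (TGraph k (j + 1)) ↔
      ((ψ ∘ embedP k j) ∈ properColorings (Pgraph 5) ∧
       ∀ c, (ψ ∘ embedT k j c) ∈ properColorings (TGraph k j)) := by
  constructor
  · intro h
    refine ⟨fun x y hxy => ?_, fun c x y hxy => ?_⟩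
    · exact h _ _ ((TGraph_succ_adj k j _ _).mpr
        ⟨fun e => hxy.ne (embedP_inj k j e), Or.inl (Or.inl ⟨x, y, hxy, rfl, rfl⟩)⟩)
    · exact h _ _ ((TGraph_succ_adj k j _ _).mpr
        ⟨fun e => hxy.ne (embedT_inj k j c e), Or.inl (Or.inr ⟨c, x, y, hxy, rfl, rfl⟩)⟩)
  · rintro ⟨hP, hT⟩ a b hab
    rw [TGraph_succ_adj] at hab
    obtain ⟨-, h | h⟩ := hab
    · rcases h with ⟨x, y, hxy, rfl, rfl⟩ | ⟨c, x, y, hxy, rfl, rfl⟩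
      · exact hP x y hxy
      · exact hT c x y hxy
    · rcases h with ⟨x, y, hxy, rfl, rfl⟩ | ⟨c, x, y, hxy, rfl, rfl⟩
      · exact (hP x y hxy).symm
      · exact (hT c x y hxy).symm
lemma card_sigma_le {ι : Type*} [Finite ι] (f : ι → Type*) [∀ i, Finite (f i)] {n m : ℕ}
    (hι : Nat.card ι ≤ n) (hf : ∀ i, Nat.card (f i) ≤ m) :
    Nat.card ((i : ι) × f i) ≤ n * m := by
  classical
  have : Fintype ι := Fintype.ofFinite ι
  have : ∀ i, Fintype (f i) := fun i => Fintype.ofFinite (f i)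
  rw [Nat.card_eq_fintype_card, Fintype.card_sigma]
  calc ∑ i, Fintype.card (f i) ≤ ∑ _i : ι, m := by
        refine Finset.sum_le_sum fun i _ => ?_
        rw [← Nat.card_eq_fintype_card]; exact hf i
    _ = Fintype.card ι * m := by rw [Finset.sum_const, Finset.card_univ, smul_eq_mul]
    _ ≤ n * m := by
        rw [← Nat.card_eq_fintype_card]
        exact Nat.mul_le_mul_right m hι
/-- The target of the structural injection at level j+1. -/
def TSig (k j : ℕ) (a b : Fin 3) : Type :=
  (φ : bset (Pgraph 5) a b) × ((c : Fin 3) →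
    bset (TGraph k j) (φ.1 (Sum.inr (gluePair c).1)) (φ.1 (Sum.inr (gluePair c).2)))
instance (k j : ℕ) (a b : Fin 3) : Finite (TSig k j a b) := by
  unfold TSig; infer_instance
/-- reconstruction of the full coloring -/
def recon (k j : ℕ) (a b : Fin 3) (x : TSig k j a b) : TVert k (j + 1) → Fin 3 :=
  fun v => match v with
  | Sum.inl z => x.1.1 (Sum.inl z)
  | Sum.inr (Sum.inl y) => x.1.1 (Sum.inr y)
  | Sum.inr (Sum.inr (c, w)) => (x.2 c).1 (Sum.inr w)
lemma card_bset_succ_le (k j : ℕ) (a b : Fin 3) :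
    Nat.card (bset (TGraph k (j + 1)) a b) ≤ Nat.card (TSig k j a b) := by
  have hF : ∀ ψ : bset (TGraph k (j + 1)) a b, (ψ.1 ∘ embedP k j) ∈ properColorings (Pgraph 5)
      ∧ ∀ c, (ψ.1 ∘ embedT k j c) ∈ properColorings (TGraph k j) :=
    fun ψ => (proper_succ_iff k j ψ.1).mp ψ.2.1
  let F : bset (TGraph k (j + 1)) a b → TSig k j a b := fun ψ =>
    ⟨⟨ψ.1 ∘ embedP k j, (hF ψ).1, ψ.2.2.1, ψ.2.2.2⟩,
     fun c => ⟨ψ.1 ∘ embedT k j c, (hF ψ).2 c, rfl, rfl⟩⟩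
  have hrec : ∀ ψ, recon k j a b (F ψ) = ψ.1 := by
    intro ψ; funext v
    rcases v with z | (y | ⟨c, w⟩) <;> rfl
  have hinj : Function.Injective F := by
    intro ψ ψ' h
    apply Subtype.ext
    rw [← hrec ψ, ← hrec ψ', h]
  exact Nat.card_le_card_of_injective F hinj
def sexp : ℕ → ℕ
  | 0 => 1
  | j + 1 => 3 * sexp j + 1
def mexp (k : ℕ) : ℕ → ℕ
  | 0 => 2 ^ k
  | j + 1 => 2 * mexp k j + sexp j + 5
lemma sexp_le_mexp (k : ℕ) : ∀ j, sexp j ≤ mexp k j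
  | 0 => Nat.one_le_two_pow
  | j + 1 => by have := sexp_le_mexp k j; simp only [sexp, mexp]; omega
lemma prod_fiber_le_00 (k j s : ℕ) (hS : Nat.card (bset (TGraph k j) 0 0) ≤ 2 ^ s)
    (φ : bset (Pgraph 5) 0 0) :
    Nat.card ((c : Fin 3) → bset (TGraph k j)
      (φ.1 (Sum.inr (gluePair c).1)) (φ.1 (Sum.inr (gluePair c).2))) ≤ 2 ^ (3 * s) := by
  rw [Nat.card_pi]
  have heq : ∀ c, φ.1 (Sum.inr (gluePair c).1) = φ.1 (Sum.inr (gluePair c).2) :=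
    P5_all_pairs φ.2.1 (by rw [φ.2.2.1, φ.2.2.2])
  have hb : ∀ c : Fin 3, Nat.card (bset (TGraph k j)
      (φ.1 (Sum.inr (gluePair c).1)) (φ.1 (Sum.inr (gluePair c).2))) ≤ 2 ^ s := fun c => by
    rw [heq c, card_bset_diag]; exact hS
  calc ∏ c, Nat.card (bset (TGraph k j) (φ.1 (Sum.inr (gluePair c).1))
        (φ.1 (Sum.inr (gluePair c).2)))
      ≤ ∏ _c : Fin 3, 2 ^ s := Finset.prod_le_prod' fun i _ => hb i
    _ = 2 ^ (3 * s) := by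
        rw [Finset.prod_const, Finset.card_univ, Fintype.card_fin, ← pow_mul]
        congr 1; ring
lemma prod_fiber_le_01 (k j s m : ℕ) (hS : Nat.card (bset (TGraph k j) 0 0) ≤ 2 ^ s)
    (hM : ∀ x y : Fin 3, Nat.card (bset (TGraph k j) x y) ≤ 2 ^ m)
    (φ : bset (Pgraph 5) 0 1) :
    Nat.card ((c : Fin 3) → bset (TGraph k j)
      (φ.1 (Sum.inr (gluePair c).1)) (φ.1 (Sum.inr (gluePair c).2))) ≤ 2 ^ (s + 2 * m) := by
  rw [Nat.card_pi]
  obtain ⟨c₀, hc₀⟩ := P5_exists_pair φ.2.1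
  have ht0 : Nat.card (bset (TGraph k j)
      (φ.1 (Sum.inr (gluePair c₀).1)) (φ.1 (Sum.inr (gluePair c₀).2))) ≤ 2 ^ s := by
    rw [hc₀, card_bset_diag]; exact hS
  have e1 : (2:ℕ) ^ s * 2 ^ m * 2 ^ m = 2 ^ (s + 2 * m) := by
    rw [← pow_add, ← pow_add]; congr 1; ring
  have e2 : (2:ℕ) ^ m * 2 ^ s * 2 ^ m = 2 ^ (s + 2 * m) := by
    rw [← pow_add, ← pow_add]; congr 1; ring
  have e3 : (2:ℕ) ^ m * 2 ^ m * 2 ^ s = 2 ^ (s + 2 * m) := by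
    rw [← pow_add, ← pow_add]; congr 1; ring
  rw [Fin.prod_univ_three]
  fin_cases c₀
  · exact le_trans (Nat.mul_le_mul (Nat.mul_le_mul ht0 (hM _ _)) (hM _ _)) (le_of_eq e1)
  · exact le_trans (Nat.mul_le_mul (Nat.mul_le_mul (hM _ _) ht0) (hM _ _)) (le_of_eq e2)
  · exact le_trans (Nat.mul_le_mul (Nat.mul_le_mul (hM _ _) (hM _ _)) ht0) (le_of_eq e3)
lemma main_bound (k : ℕ) : ∀ j, Nat.card (bset (TGraph k j) 0 0) ≤ 2 ^ sexp j ∧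
    Nat.card (bset (TGraph k j) 0 1) ≤ 2 ^ mexp k j := by
  intro j
  induction j with
  | zero =>
    constructor
    · show Nat.card (bset (Pgraph (2 ^ k)) 0 0) ≤ 2 ^ sexp 0
      have := card_bset_P00 (2 ^ k) (by positivity)
      simpa [sexp] using this
    · exact card_bset_P01 (2 ^ k)
  | succ j ih =>
    have hM : ∀ x y : Fin 3, Nat.card (bset (TGraph k j) x y) ≤ 2 ^ mexp k j := by
      intro x y
      rcases eq_or_ne x y with rfl | hxy
      · rw [card_bset_diag]
        exact le_trans ih.1 (Nat.pow_le_pow_right (by norm_num) (sexp_le_mexp k j))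
      · rw [card_bset_offdiag _ hxy]; exact ih.2
    constructor
    · calc Nat.card (bset (TGraph k (j + 1)) 0 0) ≤ Nat.card (TSig k j 0 0) :=
            card_bset_succ_le k j 0 0
        _ ≤ 2 * 2 ^ (3 * sexp j) :=
            card_sigma_le _ (card_bset_P00 5 (by norm_num)) (prod_fiber_le_00 k j _ ih.1)
        _ = 2 ^ sexp (j + 1) := by
            show _ = 2 ^ (3 * sexp j + 1)
            rw [pow_succ]; ring
    · calc Nat.card (bset (TGraph k (j + 1)) 0 1) ≤ Nat.card (TSig k j 0 1) :=
            card_bset_succ_le k j 0 1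
        _ ≤ 2 ^ 5 * 2 ^ (sexp j + 2 * mexp k j) :=
            card_sigma_le _ (by simpa using card_bset_P01 5) (prod_fiber_le_01 k j _ _ ih.1 hM)
        _ = 2 ^ mexp k (j + 1) := by
            show _ = 2 ^ (2 * mexp k j + sexp j + 5)
            rw [← pow_add]; congr 1; ring
lemma sexp_eq : ∀ j, 2 * sexp j + 1 = 3 ^ (j + 1)
  | 0 => rfl
  | j + 1 => by
    have := sexp_eq j
    simp only [sexp, pow_succ]
    omega
lemma mexp_eq (k : ℕ) : ∀ j, 2 * mexp k j + 9 = 3 ^ (j + 1) + 2 ^ (k + j + 1) + 6 * 2 ^ j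
  | 0 => by simp [mexp]; ring
  | j + 1 => by
    have h1 := mexp_eq k j
    have h2 := sexp_eq j
    simp only [mexp]
    have e1 : (3:ℕ) ^ (j + 1 + 1) = 3 * 3 ^ (j + 1) := by ring
    have e2 : (2:ℕ) ^ (k + (j + 1) + 1) = 2 * 2 ^ (k + j + 1) := by ring
    have e3 : (2:ℕ) ^ (j + 1) = 2 * 2 ^ j := by ring
    omega
lemma six_two_le : ∀ ℓ : ℕ, 6 * 2 ^ ℓ ≤ 5 * 3 ^ ℓ + 1
  | 0 => by norm_num
  | ℓ + 1 => by
    have := six_two_le ℓ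
    have h3 : 1 ≤ 3 ^ ℓ := Nat.one_le_pow _ _ (by norm_num)
    have e1 : (2:ℕ) ^ (ℓ + 1) = 2 * 2 ^ ℓ := by ring
    have e2 : (3:ℕ) ^ (ℓ + 1) = 3 * 3 ^ ℓ := by ring
    omega
lemma mexp_final (k ℓ : ℕ) (h2 : 2 ^ (k + ℓ) ≤ 2 * 3 ^ ℓ) :
    mexp k ℓ + 4 ≤ 6 * 3 ^ ℓ := by
  have h1 := mexp_eq k ℓ
  have h3 := six_two_le ℓ
  have e1 : (3:ℕ) ^ (ℓ + 1) = 3 * 3 ^ ℓ := by ring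
  have e2 : (2:ℕ) ^ (k + ℓ + 1) = 2 * 2 ^ (k + ℓ) := by ring
  omega
lemma key_pow_bound (ℓ k : ℕ) (hk : (k : ℤ) = ⌈(ℓ : ℝ) * Real.logb 2 (3 / 2)⌉) :
    2 ^ (k + ℓ) ≤ 2 * 3 ^ ℓ := by
  have hkr : (k : ℝ) ≤ (ℓ : ℝ) * Real.logb 2 (3 / 2) + 1 := by
    have h1 : ((k : ℤ) : ℝ) = ((⌈(ℓ : ℝ) * Real.logb 2 (3 / 2)⌉ : ℤ) : ℝ) := by
      exact_mod_cast congrArg (fun z : ℤ => (z : ℝ)) hk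
    have h2 := Int.ceil_lt_add_one ((ℓ : ℝ) * Real.logb 2 (3 / 2))
    push_cast at h1
    linarith [h1 ▸ h2]
  have hL : (2 : ℝ) ^ (Real.logb 2 (3 / 2)) = 3 / 2 :=
    Real.rpow_logb (by norm_num) (by norm_num) (by norm_num)
  have hmono : (2 : ℝ) ^ (k : ℝ) ≤ (2 : ℝ) ^ ((ℓ : ℝ) * Real.logb 2 (3 / 2) + 1) :=
    Real.rpow_le_rpow_of_exponent_le (by norm_num) hkr
  have hsplit : (2 : ℝ) ^ ((ℓ : ℝ) * Real.logb 2 (3 / 2) + 1)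
      = ((3 : ℝ) / 2) ^ (ℓ : ℕ) * 2 := by
    rw [Real.rpow_add (by norm_num), Real.rpow_one, mul_comm (ℓ : ℝ),
      Real.rpow_mul (by norm_num), hL, Real.rpow_natCast]
  have hnat : ((2 : ℝ)) ^ (k : ℕ) ≤ ((3 : ℝ) / 2) ^ (ℓ : ℕ) * 2 := by
    rw [← Real.rpow_natCast 2 k]
    rw [hsplit] at hmono
    exact hmono
  have hfinal : ((2 : ℝ)) ^ (k + ℓ : ℕ) ≤ 2 * (3 : ℝ) ^ (ℓ : ℕ) := by
    have hpos : (0 : ℝ) < 2 ^ (ℓ : ℕ) := by positivity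
    have := mul_le_mul_of_nonneg_right hnat (le_of_lt hpos)
    calc ((2 : ℝ)) ^ (k + ℓ : ℕ) = 2 ^ (k : ℕ) * 2 ^ (ℓ : ℕ) := by rw [pow_add]
      _ ≤ ((3 : ℝ) / 2) ^ (ℓ : ℕ) * 2 * 2 ^ (ℓ : ℕ) := this
      _ = 2 * (3 : ℝ) ^ (ℓ : ℕ) := by
          rw [div_pow]
          field_simp
  exact_mod_cast hfinal

/-- For every `ℓ ≥ 1`, with `k = ⌈ℓ · log₂(3/2)⌉`, the number `c_ℓ` of proper
3-colorings of `T(u,v,k,ℓ)` satisfies `c_ℓ ≤ 2^(6·3^ℓ)`. -/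
theorem stmt14 (ℓ k : ℕ) (hℓ : 1 ≤ ℓ)
    (hk : (k : ℤ) = ⌈(ℓ : ℝ) * Real.logb 2 (3 / 2)⌉) :
    Nat.card {ψ : TVert k ℓ → Fin 3 // ψ ∈ properColorings (TGraph k ℓ)} ≤
      2 ^ (6 * 3 ^ ℓ) := by
  have hmb := main_bound k ℓ
  have hM : ∀ x y : Fin 3, Nat.card (bset (TGraph k ℓ) x y) ≤ 2 ^ mexp k ℓ := by
    intro x y
    rcases eq_or_ne x y with rfl | hxy
    · rw [card_bset_diag]
      exact le_trans hmb.1 (Nat.pow_le_pow_right (by norm_num) (sexp_le_mexp k ℓ))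
    · rw [card_bset_offdiag _ hxy]; exact hmb.2
  let F : {ψ : TVert k ℓ → Fin 3 // ψ ∈ properColorings (TGraph k ℓ)} →
      (p : Fin 3 × Fin 3) × bset (TGraph k ℓ) p.1 p.2 :=
    fun ψ => ⟨(ψ.1 (Sum.inl 0), ψ.1 (Sum.inl 1)), ⟨ψ.1, ψ.2, rfl, rfl⟩⟩
  have hinj : Function.Injective F := by
    intro ψ ψ' h
    exact Subtype.ext (congrArg (fun x : (p : Fin 3 × Fin 3) × bset (TGraph k ℓ) p.1 p.2
      => x.2.1) h)
  calc Nat.card {ψ : TVert k ℓ → Fin 3 // ψ ∈ properColorings (TGraph k ℓ)}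
      ≤ Nat.card ((p : Fin 3 × Fin 3) × bset (TGraph k ℓ) p.1 p.2) :=
        Nat.card_le_card_of_injective F hinj
    _ ≤ 16 * 2 ^ mexp k ℓ :=
        card_sigma_le _ (by simp [Nat.card_eq_fintype_card]) (fun p => hM p.1 p.2)
    _ = 2 ^ (mexp k ℓ + 4) := by rw [pow_add]; ring
    _ ≤ 2 ^ (6 * 3 ^ ℓ) := Nat.pow_le_pow_right (by norm_num)
        (mexp_final k ℓ (key_pow_bound ℓ k hk))
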